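/- Let G be a graph, A ⊆ V(G), and suppose the bipartite graph G[A, V(G)\A] has a maximum induced matching of size w (i.e., mim(A) = w). Then for every positive integer d, the number of equivalence classes of ≡^A_{d,1} on subsets of A is at most n^{d·w}, where n = |V(G)|. -/

import Mathlib

open SimpleGraph

variable {V : Type*} [Fintype V] [DecidableEq V]

/-- The bipartite cut graph `G[A, V \ A]`. -/
def cutGraph (G : SimpleGraph V) (A : Set V) : SimpleGraph V where
  Adj u v := G.Adj u v ∧ ((u ∈ A ∧ v ∉ A) ∨ (u ∉ A ∧ v ∈ A))
  symm := by
    constructor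
    intro u v h
    exact ⟨h.1.symm, h.2.elim (fun hx => Or.inr ⟨hx.2, hx.1⟩) (fun hx => Or.inl ⟨hx.2, hx.1⟩)⟩
  loopless := by constructor; intro v h; exact G.irrefl h.1

/-- An induced matching in `H`. -/
def IsInducedMatching (H : SimpleGraph V) (M : H.Subgraph) : Prop :=
  M.IsMatching ∧ ∀ u v, u ∈ M.verts → v ∈ M.verts → H.Adj u v → M.Adj u v

/-- The (d,1)-neighbor equivalence over `A`, as a setoid on subsets of `A`. -/
def necSetoid (G : SimpleGraph V) (A : Set V) (d : ℕ) : Setoid {S : Set V // S ⊆ A} :=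
  ⟨fun B C => ∀ v ∉ A,
      min d (G.neighborSet v ∩ B.1).ncard = min d (G.neighborSet v ∩ C.1).ncard,
   ⟨fun _ _ _ => rfl,
    fun h v hv => (h v hv).symm,
    fun h1 h2 v hv => (h1 v hv).trans (h2 v hv)⟩⟩

open Finset in
lemma choose_succ_le (m k : ℕ) : m.choose (k+1) ≤ m * m.choose k := by
  calc m.choose (k+1) ≤ m.choose (k+1) * (k+1) := Nat.le_mul_of_pos_right _ (Nat.succ_pos k)
  _ = m.choose k * (m - k) := Nat.choose_succ_right_eq m k
  _ ≤ m.choose k * m := Nat.mul_le_mul_left _ (Nat.sub_le m k)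
  _ = m * m.choose k := Nat.mul_comm _ _

lemma count_small_subsets (T : Finset V) (k : ℕ) :
    (T.powerset.filter (fun S => S.card ≤ k)).card ≤ (T.card + 1) ^ k := by
  induction k with
  | zero =>
    simp only [pow_zero]
    apply Finset.card_le_one.mpr
    intro a ha b hb
    simp only [Finset.mem_filter, Nat.le_zero, Finset.card_eq_zero] at ha hb
    rw [ha.2, hb.2]
  | succ k ih =>
    have hsplit : T.powerset.filter (fun S => S.card ≤ k + 1) ⊆
        T.powerset.filter (fun S => S.card ≤ k) ∪ T.powersetCard (k+1) := by
      intro S hS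
      simp only [Finset.mem_filter, Finset.mem_union, Finset.mem_powerset, Finset.mem_powersetCard] at *
      rcases Nat.lt_or_ge S.card (k+1) with h | h
      · exact Or.inl ⟨hS.1, Nat.lt_succ_iff.mp h⟩
      · exact Or.inr ⟨hS.1, le_antisymm hS.2 h⟩
    have h1 : (T.powersetCard (k+1)).card ≤ T.card * (T.powerset.filter (fun S => S.card ≤ k)).card := by
      rw [Finset.card_powersetCard]
      refine (choose_succ_le T.card k).trans (Nat.mul_le_mul_left _ ?_)
      rw [← Finset.card_powersetCard k T]
      apply Finset.card_le_card
      intro S hS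
      rw [Finset.mem_powersetCard] at hS
      simp only [Finset.mem_filter, Finset.mem_powerset]
      exact ⟨hS.1, hS.2.le⟩
    calc (T.powerset.filter (fun S => S.card ≤ k + 1)).card
        ≤ _ := Finset.card_le_card hsplit
      _ ≤ (T.powerset.filter (fun S => S.card ≤ k)).card + (T.powersetCard (k+1)).card :=
          Finset.card_union_le _ _
      _ ≤ (T.powerset.filter (fun S => S.card ≤ k)).card
          + T.card * (T.powerset.filter (fun S => S.card ≤ k)).card := by omega
      _ = (T.card + 1) * (T.powerset.filter (fun S => S.card ≤ k)).card := by ring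
      _ ≤ (T.card + 1) * (T.card + 1) ^ k := Nat.mul_le_mul_left _ ih
      _ = (T.card + 1) ^ (k+1) := by ring

open Finset in
lemma extract (G : SimpleGraph V) [DecidableRel G.Adj] (A : Set V) (d : ℕ) :
    ∀ (n : ℕ) (L Y : Finset V), L.card = n → (↑L ⊆ A) → (∀ y ∈ Y, (y : V) ∉ A) →
    (∀ y ∈ Y, ((G.neighborFinset y) ∩ L).card ≤ d) →
    (∀ x ∈ L, ∃ y ∈ Y, G.Adj x y) →
    ∃ (m : ℕ) (x y : Fin m → V), L.card ≤ d * m ∧ (∀ i, x i ∈ L) ∧ (∀ i, y i ∈ Y) ∧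
      (∀ i, G.Adj (x i) (y i)) ∧ Function.Injective x ∧ Function.Injective y ∧
      (∀ i j, i ≠ j → ¬ G.Adj (x i) (y j)) := by
  intro n
  induction n using Nat.strong_induction_on with
  | _ n ih =>
    intro L Y hcard hLA hYA hdeg hcov
    rcases Finset.eq_empty_or_nonempty L with rfl | hLne
    · exact ⟨0, Fin.elim0, Fin.elim0, by simp, fun i => i.elim0, fun i => i.elim0,
        fun i => i.elim0, fun i => i.elim0, fun i => i.elim0, fun i => i.elim0⟩
    · obtain ⟨x0, hx0L, hmin⟩ :=
        Finset.exists_min_image L (fun x => ((G.neighborFinset x) ∩ Y).card) hLne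
      obtain ⟨y0, hy0Y, hadj0⟩ := hcov x0 hx0L
      set L' := L \ G.neighborFinset y0 with hL'
      set Y' := Y \ G.neighborFinset x0 with hY'
      have hx0notL' : x0 ∉ L' := by
        simp [hL', SimpleGraph.mem_neighborFinset, hadj0.symm]
      have hL'sub : L' ⊆ L := Finset.sdiff_subset
      have hL'lt : L'.card < n := by
        rw [← hcard]
        exact Finset.card_lt_card ⟨hL'sub, fun h => hx0notL' (h hx0L)⟩
      have hcov' : ∀ x ∈ L', ∃ y ∈ Y', G.Adj x y := by
        intro x hxL'
        by_contra hno
        push_neg at hno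
        have hxL : x ∈ L := hL'sub hxL'
        have hsub : (G.neighborFinset x) ∩ Y ⊆ (G.neighborFinset x0) ∩ Y := by
          intro y hy
          simp only [Finset.mem_inter, SimpleGraph.mem_neighborFinset] at hy ⊢
          refine ⟨?_, hy.2⟩
          by_contra hyx0
          exact hno y (Finset.mem_sdiff.mpr ⟨hy.2, by
            simpa [SimpleGraph.mem_neighborFinset] using hyx0⟩) hy.1
        have heq : (G.neighborFinset x) ∩ Y = (G.neighborFinset x0) ∩ Y :=
          Finset.eq_of_subset_of_card_le hsub (by
            have := hmin x hxL
            have hle := Finset.card_le_card hsub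
            omega)
        have hy0x : y0 ∈ (G.neighborFinset x) ∩ Y := by
          rw [heq]
          exact Finset.mem_inter.mpr ⟨(SimpleGraph.mem_neighborFinset _ _ _).mpr hadj0, hy0Y⟩
        have : G.Adj x y0 := (SimpleGraph.mem_neighborFinset _ _ _).mp (Finset.mem_inter.mp hy0x).1
        rw [hL', Finset.mem_sdiff] at hxL'
        exact hxL'.2 ((SimpleGraph.mem_neighborFinset _ _ _).mpr this.symm)
      obtain ⟨m, xf, yf, hm, hxfL, hyfY, hxyadj, hxinj, hyinj, hnadj⟩ :=
        ih L'.card hL'lt L' Y' rfl (fun v hv => hLA (hL'sub hv))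
          (fun y hy => hYA y (Finset.mem_sdiff.mp hy).1)
          (fun y hy => le_trans (Finset.card_le_card (Finset.inter_subset_inter (Finset.Subset.refl _) hL'sub))
            (hdeg y (Finset.mem_sdiff.mp hy).1))
          hcov'
      refine ⟨m + 1, Fin.cons x0 xf, Fin.cons y0 yf, ?_, ?_, ?_, ?_, ?_, ?_, ?_⟩
      · -- card bound
        have h1 : L.card ≤ L'.card + ((G.neighborFinset y0) ∩ L).card := by
          have : L ⊆ L' ∪ ((G.neighborFinset y0) ∩ L) := by
            intro a ha
            by_cases h : a ∈ G.neighborFinset y0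
            · exact Finset.mem_union_right _ (Finset.mem_inter.mpr ⟨h, ha⟩)
            · exact Finset.mem_union_left _ (Finset.mem_sdiff.mpr ⟨ha, h⟩)
          exact le_trans (Finset.card_le_card this) (Finset.card_union_le _ _)
        have h2 := hdeg y0 hy0Y
        have : d * (m + 1) = d * m + d := by ring
        omega
      · intro i
        refine Fin.cases ?_ ?_ i
        · simpa using hx0L
        · intro j; simpa using hL'sub (hxfL j)
      · intro i
        refine Fin.cases ?_ ?_ i
        · simpa using hy0Y
        · intro j; simpa using (Finset.mem_sdiff.mp (hyfY j)).1
      · intro i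
        refine Fin.cases ?_ ?_ i
        · simpa using hadj0
        · intro j; simpa using hxyadj j
      · -- Injective x
        intro i j hij
        rcases Fin.eq_zero_or_eq_succ i with rfl | ⟨i', rfl⟩ <;>
          rcases Fin.eq_zero_or_eq_succ j with rfl | ⟨j', rfl⟩
        · rfl
        · simp only [Fin.cons_zero, Fin.cons_succ] at hij
          exact absurd (hxfL j') (hij ▸ hx0notL')
        · simp only [Fin.cons_zero, Fin.cons_succ] at hij
          exact absurd (hij ▸ hxfL i') hx0notL'
        · simp only [Fin.cons_succ] at hij
          exact congrArg Fin.succ (hxinj hij)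
      · -- Injective y
        have hy0notY' : ∀ j, yf j ≠ y0 := by
          intro j h
          have := (Finset.mem_sdiff.mp (hyfY j)).2
          rw [h] at this
          exact this ((SimpleGraph.mem_neighborFinset _ _ _).mpr hadj0)
        intro i j hij
        rcases Fin.eq_zero_or_eq_succ i with rfl | ⟨i', rfl⟩ <;>
          rcases Fin.eq_zero_or_eq_succ j with rfl | ⟨j', rfl⟩
        · rfl
        · simp only [Fin.cons_zero, Fin.cons_succ] at hij
          exact absurd hij.symm (hy0notY' j')
        · simp only [Fin.cons_zero, Fin.cons_succ] at hij
          exact absurd hij (hy0notY' i')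
        · simp only [Fin.cons_succ] at hij
          exact congrArg Fin.succ (hyinj hij)
      · -- non-adjacency
        intro i j hij hadj
        rcases Fin.eq_zero_or_eq_succ i with rfl | ⟨i', rfl⟩ <;>
          rcases Fin.eq_zero_or_eq_succ j with rfl | ⟨j', rfl⟩
        · exact hij rfl
        · simp only [Fin.cons_zero, Fin.cons_succ] at hadj
          exact (Finset.mem_sdiff.mp (hyfY j')).2
            ((SimpleGraph.mem_neighborFinset _ _ _).mpr hadj)
        · simp only [Fin.cons_zero, Fin.cons_succ] at hadj
          exact (Finset.mem_sdiff.mp (hxfL i')).2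
            ((SimpleGraph.mem_neighborFinset _ _ _).mpr hadj.symm)
        · simp only [Fin.cons_succ] at hadj
          exact hnadj i' j' (fun he => hij (congrArg Fin.succ he)) hadj

lemma matching_of_pairs (G : SimpleGraph V) (A : Set V) (m : ℕ) (x y : Fin m → V)
    (hxA : ∀ i, x i ∈ A) (hyA : ∀ i, y i ∉ A) (hadj : ∀ i, G.Adj (x i) (y i))
    (hxinj : Function.Injective x) (hyinj : Function.Injective y)
    (hnadj : ∀ i j, i ≠ j → ¬ G.Adj (x i) (y j)) :
    ∃ M : (cutGraph G A).Subgraph, IsInducedMatching (cutGraph G A) M ∧ M.edgeSet.ncard = m := by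
  refine ⟨⟨Set.range x ∪ Set.range y,
      fun u v => ∃ i, (u = x i ∧ v = y i) ∨ (u = y i ∧ v = x i), ?_, ?_, ?_⟩, ⟨?_, ?_⟩, ?_⟩
  · rintro u v ⟨i, ⟨rfl, rfl⟩ | ⟨rfl, rfl⟩⟩
    · exact ⟨hadj i, Or.inl ⟨hxA i, hyA i⟩⟩
    · exact ⟨(hadj i).symm, Or.inr ⟨hyA i, hxA i⟩⟩
  · rintro u v ⟨i, ⟨rfl, rfl⟩ | ⟨rfl, rfl⟩⟩
    · exact Or.inl ⟨i, rfl⟩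
    · exact Or.inr ⟨i, rfl⟩
  · constructor; rintro u v ⟨i, ⟨rfl, rfl⟩ | ⟨rfl, rfl⟩⟩
    · exact ⟨i, Or.inr ⟨rfl, rfl⟩⟩
    · exact ⟨i, Or.inl ⟨rfl, rfl⟩⟩
  · -- IsMatching
    rintro v (⟨i, rfl⟩ | ⟨i, rfl⟩)
    · refine ⟨y i, ⟨i, Or.inl ⟨rfl, rfl⟩⟩, ?_⟩
      rintro w ⟨j, ⟨hx', rfl⟩ | ⟨hy', rfl⟩⟩
      · rw [hxinj hx']
      · exact absurd (hy' ▸ hxA i) (hyA j)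
    · refine ⟨x i, ⟨i, Or.inr ⟨rfl, rfl⟩⟩, ?_⟩
      rintro w ⟨j, ⟨hx', rfl⟩ | ⟨hy', rfl⟩⟩
      · exact absurd (hx' ▸ hyA i) (not_not.mpr (hxA j))
      · rw [hyinj hy']
  · -- induced
    rintro u v (⟨i, rfl⟩ | ⟨i, rfl⟩) (⟨j, rfl⟩ | ⟨j, rfl⟩) hAdj
    · rcases hAdj.2 with ⟨_, h⟩ | ⟨h, _⟩
      · exact absurd (hxA j) h
      · exact absurd (hxA i) h
    · by_cases hij : i = j
      · exact ⟨i, Or.inl ⟨rfl, hij ▸ rfl⟩⟩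
      · exact absurd hAdj.1 (hnadj i j hij)
    · by_cases hij : j = i
      · exact ⟨j, Or.inr ⟨hij ▸ rfl, rfl⟩⟩
      · exact absurd hAdj.1.symm (hnadj j i hij)
    · rcases hAdj.2 with ⟨h, _⟩ | ⟨_, h⟩
      · exact absurd h (hyA i)
      · exact absurd h (hyA j)
  · -- edgeSet ncard
    classical
    have hSet : (⟨Set.range x ∪ Set.range y,
        fun u v => ∃ i, (u = x i ∧ v = y i) ∨ (u = y i ∧ v = x i), by
          rintro u v ⟨i, ⟨rfl, rfl⟩ | ⟨rfl, rfl⟩⟩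
          · exact ⟨hadj i, Or.inl ⟨hxA i, hyA i⟩⟩
          · exact ⟨(hadj i).symm, Or.inr ⟨hyA i, hxA i⟩⟩, by
          rintro u v ⟨i, ⟨rfl, rfl⟩ | ⟨rfl, rfl⟩⟩
          · exact Or.inl ⟨i, rfl⟩
          · exact Or.inr ⟨i, rfl⟩, by
          constructor; rintro u v ⟨i, ⟨rfl, rfl⟩ | ⟨rfl, rfl⟩⟩
          · exact ⟨i, Or.inr ⟨rfl, rfl⟩⟩
          · exact ⟨i, Or.inl ⟨rfl, rfl⟩⟩⟩ : (cutGraph G A).Subgraph).edgeSet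
        = Set.range (fun i => s(x i, y i)) := by
      ext e
      induction e using Sym2.inductionOn with
      | hf a b =>
        rw [Subgraph.mem_edgeSet]
        constructor
        · rintro ⟨i, ⟨rfl, rfl⟩ | ⟨rfl, rfl⟩⟩
          · exact ⟨i, rfl⟩
          · exact ⟨i, Sym2.eq_swap⟩
        · rintro ⟨i, hi⟩
          simp only at hi
          rcases Sym2.eq_iff.mp hi with ⟨h1, h2⟩ | ⟨h1, h2⟩
          · exact ⟨i, Or.inl ⟨h1.symm, h2.symm⟩⟩
          · exact ⟨i, Or.inr ⟨h2.symm, h1.symm⟩⟩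
    rw [hSet]
    have hinj : Function.Injective (fun i => s(x i, y i)) := by
      intro i j hij
      simp only [Sym2.eq_iff] at hij
      rcases hij with ⟨h1, _⟩ | ⟨h1, _⟩
      · exact hxinj h1
      · exact absurd (h1 ▸ hxA i) (hyA j)
    rw [show Set.range (fun i => s(x i, y i)) = ↑(Finset.image (fun i => s(x i, y i)) Finset.univ) by
        simp]
    rw [Set.ncard_coe_finset, Finset.card_image_of_injective _ hinj, Finset.card_univ,
      Fintype.card_fin]

lemma rep_small (G : SimpleGraph V) (A : Set V) (d w : ℕ)
    (hub : ∀ M : (cutGraph G A).Subgraph,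
      IsInducedMatching (cutGraph G A) M → M.edgeSet.ncard ≤ w)
    (B : Set V) (hBA : B ⊆ A) :
    ∃ R : Set V, R ⊆ B ∧ R.ncard ≤ d * w ∧
      ∀ v ∉ A, min d (G.neighborSet v ∩ R).ncard = min d (G.neighborSet v ∩ B).ncard := by
  classical
  set P : ℕ → Prop := fun c => ∃ R : Set V, R ⊆ B ∧
    (∀ v ∉ A, min d (G.neighborSet v ∩ R).ncard = min d (G.neighborSet v ∩ B).ncard) ∧
    R.ncard = c with hP
  have hPex : ∃ c, P c := ⟨B.ncard, B, Set.Subset.refl _, fun v _ => rfl, rfl⟩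
  obtain ⟨R, hRB, hRrel, hRc⟩ := Nat.find_spec hPex
  have hminimal : ∀ R' : Set V, R' ⊆ B →
      (∀ v ∉ A, min d (G.neighborSet v ∩ R').ncard = min d (G.neighborSet v ∩ B).ncard) →
      R.ncard ≤ R'.ncard := by
    intro R' h1 h2
    rw [hRc]
    exact Nat.find_le ⟨R', h1, h2, rfl⟩
  -- witness property
  have hwit : ∀ x ∈ R, ∃ v, v ∉ A ∧ G.Adj v x ∧ (G.neighborSet v ∩ R).ncard ≤ d := by
    intro x hxR
    have hlt : (R \ {x}).ncard < R.ncard := by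
      have hfin : R.Finite := Set.toFinite R
      have : (R \ {x}).ncard = R.ncard - 1 := by
        rw [Set.ncard_diff (Set.singleton_subset_iff.mpr hxR), Set.ncard_singleton]
      have hpos : 0 < R.ncard := Set.ncard_pos hfin |>.mpr ⟨x, hxR⟩
      omega
    have hnotrel : ¬ (∀ v ∉ A, min d (G.neighborSet v ∩ (R \ {x})).ncard
        = min d (G.neighborSet v ∩ B).ncard) := by
      intro hrel
      exact absurd (hminimal (R \ {x}) (fun a ha => hRB ha.1) hrel) (by omega)
    push_neg at hnotrel
    obtain ⟨v, hvA, hne⟩ := hnotrel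
    refine ⟨v, hvA, ?_, ?_⟩
    · by_contra hnadj
      apply hne
      rw [show G.neighborSet v ∩ (R \ {x}) = G.neighborSet v ∩ R by
        ext a
        simp only [Set.mem_inter_iff, Set.mem_diff, Set.mem_singleton_iff]
        constructor
        · rintro ⟨h1, h2, _⟩; exact ⟨h1, h2⟩
        · rintro ⟨h1, h2⟩
          refine ⟨h1, h2, ?_⟩
          rintro rfl
          exact hnadj h1]
      exact hRrel v hvA
    · by_contra hgt
      push_neg at hgt
      apply hne
      have h1 : (G.neighborSet v ∩ (R \ {x})).ncard ≥ d := by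
        have hsub : G.neighborSet v ∩ R ⊆ (G.neighborSet v ∩ (R \ {x})) ∪ {x} := by
          intro a ⟨ha1, ha2⟩
          by_cases hax : a = x
          · exact Or.inr hax
          · exact Or.inl ⟨ha1, ha2, hax⟩
        have := Set.ncard_union_le (G.neighborSet v ∩ (R \ {x})) {x}
        have hle := Set.ncard_le_ncard hsub (Set.toFinite _)
        rw [Set.ncard_singleton] at this
        omega
      have h2 : min d (G.neighborSet v ∩ (R \ {x})).ncard = d := min_eq_left h1
      have h3 : min d (G.neighborSet v ∩ R).ncard = d := min_eq_left (le_of_lt hgt)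
      rw [h2, ← hRrel v hvA]
      exact h3.symm
  -- now extraction
  haveI : DecidableRel G.Adj := Classical.decRel _
  set L : Finset V := R.toFinset with hL
  have hcardLR : L.card = R.ncard := (Set.ncard_eq_toFinset_card' R).symm
  have hintercard : ∀ v : V, ((G.neighborFinset v) ∩ L).card = (G.neighborSet v ∩ R).ncard := by
    intro v
    rw [Set.ncard_eq_toFinset_card' (G.neighborSet v ∩ R)]
    congr 1
    ext a
    simp [hL, SimpleGraph.mem_neighborFinset]
  set Y : Finset V := Finset.univ.filter
    (fun v => v ∉ A ∧ ((G.neighborFinset v) ∩ L).card ≤ d) with hY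
  obtain ⟨m, xf, yf, hcount, hxL, hyY, hadjf, hxinj, hyinj, hnadjf⟩ :=
    extract G A d L.card L Y rfl
      (by intro a ha; exact hBA (hRB (by simpa [hL] using ha)))
      (by intro y hy; exact ((Finset.mem_filter.mp hy).2).1)
      (by intro y hy; exact ((Finset.mem_filter.mp hy).2).2)
      (by
        intro x hx
        obtain ⟨v, hvA, hvadj, hvdeg⟩ := hwit x (by simpa [hL] using hx)
        exact ⟨v, Finset.mem_filter.mpr ⟨Finset.mem_univ v, hvA, by rw [hintercard]; exact hvdeg⟩,
          hvadj.symm⟩)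
  obtain ⟨M, hM, hMcard⟩ := matching_of_pairs G A m xf yf
    (fun i => hBA (hRB (by simpa [hL] using hxL i)))
    (fun i => ((Finset.mem_filter.mp (hyY i)).2).1)
    hadjf hxinj hyinj hnadjf
  have hmw : m ≤ w := hMcard ▸ hub M hM
  refine ⟨R, hRB, ?_, hRrel⟩
  calc R.ncard = L.card := hcardLR.symm
    _ ≤ d * m := hcount
    _ ≤ d * w := Nat.mul_le_mul_left d hmw

theorem stmt19 (G : SimpleGraph V) (A : Set V) (d w : ℕ) (hd : 0 < d)
    (hex : ∃ M : (cutGraph G A).Subgraph,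
      IsInducedMatching (cutGraph G A) M ∧ M.edgeSet.ncard = w)
    (hub : ∀ M : (cutGraph G A).Subgraph,
      IsInducedMatching (cutGraph G A) M → M.edgeSet.ncard ≤ w) :
    Nat.card (Quotient (necSetoid G A d)) ≤ (Fintype.card V) ^ (d * w) := by
  classical
  by_cases hA : A = Set.univ
  · -- single class
    have hsub : Subsingleton (Quotient (necSetoid G A d)) := by
      constructor
      intro q1 q2
      induction q1 using Quotient.ind with
      | _ B1 =>
      induction q2 using Quotient.ind with
      | _ B2 =>
      apply Quotient.sound
      intro v hv
      exact absurd (hA ▸ Set.mem_univ v) hv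
    have h1 : Nat.card (Quotient (necSetoid G A d)) = 1 := by
      haveI := hsub
      exact Nat.card_of_subsingleton (Quotient.mk (necSetoid G A d) ⟨∅, Set.empty_subset A⟩)
    rcases isEmpty_or_nonempty V with hV | hV
    · -- w = 0
      obtain ⟨M, _, hMw⟩ := hex
      have : M.edgeSet = ∅ := by
        ext e
        induction e using Sym2.inductionOn with
        | hf a b => exact (IsEmpty.false a).elim
      rw [this, Set.ncard_empty] at hMw
      rw [← hMw, mul_zero, pow_zero]
      exact le_of_eq h1
    · have : 1 ≤ (Fintype.card V) ^ (d * w) :=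
        Nat.one_le_pow _ _ Fintype.card_pos
      omega
  · -- main case
    have hAne : ∃ v, v ∉ A := by
      by_contra h
      push_neg at h
      exact hA (Set.eq_univ_of_forall h)
    set k := d * w with hk
    have hrep : ∀ q : Quotient (necSetoid G A d), ∃ R : {S : Set V // S ⊆ A},
        R.1.ncard ≤ k ∧ Quotient.mk (necSetoid G A d) R = q := by
      intro q
      obtain ⟨B, hB⟩ := Quotient.exists_rep q
      obtain ⟨R, hRB, hRcard, hRrel⟩ := rep_small G A d w hub B.1 B.2
      refine ⟨⟨R, hRB.trans B.2⟩, hRcard, ?_⟩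
      rw [← hB]
      exact Quotient.sound hRrel
    choose F hF1 hF2 using hrep
    set T := A.toFinset with hT
    set P := T.powerset.filter (fun S => S.card ≤ k) with hPdef
    have hmem : ∀ q, (F q).1.toFinset ∈ P := by
      intro q
      rw [hPdef, Finset.mem_filter, Finset.mem_powerset]
      constructor
      · intro a ha
        rw [Set.mem_toFinset] at ha
        rw [hT, Set.mem_toFinset]
        exact (F q).2 ha
      · rw [← Set.ncard_eq_toFinset_card']
        exact hF1 q
    have hinj : Function.Injective (fun q => (⟨(F q).1.toFinset, hmem q⟩ : {S // S ∈ P})) := by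
      intro q1 q2 h
      simp only [Subtype.mk.injEq] at h
      have : (F q1).1 = (F q2).1 := by
        rw [← Set.coe_toFinset (F q1).1, ← Set.coe_toFinset (F q2).1, h]
      have hFF : F q1 = F q2 := Subtype.ext this
      rw [← hF2 q1, ← hF2 q2, hFF]
    have h1 : Nat.card (Quotient (necSetoid G A d)) ≤ Nat.card {S // S ∈ P} :=
      Nat.card_le_card_of_injective _ hinj
    have h2 : Nat.card {S // S ∈ P} = P.card := by
      rw [Nat.card_eq_fintype_card, Fintype.card_coe]
    have h3 : P.card ≤ (T.card + 1) ^ k := count_small_subsets T k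
    have h4 : T.card + 1 ≤ Fintype.card V := by
      obtain ⟨v0, hv0⟩ := hAne
      have : T ≠ Finset.univ := by
        intro h
        have hv0T : v0 ∈ T := h.symm ▸ Finset.mem_univ v0
        exact hv0 (Set.mem_toFinset.mp hv0T)
      have := Finset.card_lt_card (Finset.ssubset_univ_iff.mpr this)
      rw [Finset.card_univ] at this
      omega
    calc Nat.card (Quotient (necSetoid G A d)) ≤ P.card := h2 ▸ h1
      _ ≤ (T.card + 1) ^ k := h3
      _ ≤ (Fintype.card V) ^ k := Nat.pow_le_pow_left (by omega) k
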